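/- arXiv:0909.2381 — 7 statements merged into one kernel-verified Lean document; each statement's English description precedes it below -/
import Mathlib

section
/- In the symmetric group S(ℕ) with the topology of pointwise convergence, the sequence {b_n}, where b_n is the transposition swapping n and n+1, is Cauchy productive but not productive: the partial products π_n = b_0·b_1···b_n form a left Cauchy sequence that does not converge in S(ℕ). -/
open Filter Topology

def LeftCauchy {G : Type*} [Group G] [TopologicalSpace G] (a : ℕ → G) : Prop :=
  ∀ U ∈ 𝓝 (1 : G), ∃ n : ℕ, ∀ k ≥ n, ∀ l ≥ n, (a k)⁻¹ * a l ∈ U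

def partProd {G : Type*} [Monoid G] (b : ℕ → G) (n : ℕ) : G :=
  ((List.range n).map b).prod

def CauchyProductive {G : Type*} [Group G] [TopologicalSpace G] (b : ℕ → G) : Prop :=
  LeftCauchy (fun n => partProd b (n + 1))

/-- The topology of pointwise convergence on the symmetric group `S(ℕ)`, induced from
the product topology on `ℕ → ℕ` (with `ℕ` discrete). -/
instance : TopologicalSpace (Equiv.Perm ℕ) :=
  TopologicalSpace.induced (fun σ => (σ : ℕ → ℕ)) Pi.topologicalSpace

private def sw : ℕ → Equiv.Perm ℕ := fun n => Equiv.swap n (n + 1)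

private lemma pp_succ (m : ℕ) : partProd sw (m + 1) = partProd sw m * sw m := by
  simp [partProd, List.range_succ]

private lemma pp_fix {m x : ℕ} (h : m < x) : partProd sw m x = x := by
  induction m with
  | zero => simp [partProd]
  | succ m ih =>
    rw [pp_succ]
    have hx : sw m x = x := Equiv.swap_apply_of_ne_of_ne (by omega) (by omega)
    simp only [Equiv.Perm.mul_apply, hx, ih (by omega)]

private lemma pp_apply {m x : ℕ} (h : x < m) : partProd sw m x = x + 1 := by
  induction m with
  | zero => omega
  | succ m ih =>
    rw [pp_succ]
    rcases eq_or_lt_of_le (Nat.lt_succ_iff.mp h) with rfl | hx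
    · have : sw x x = x + 1 := Equiv.swap_apply_left x (x + 1)
      simp only [Equiv.Perm.mul_apply, this, pp_fix (Nat.lt_succ_self x)]
    · have hs : sw m x = x := Equiv.swap_apply_of_ne_of_ne (by omega) (by omega)
      simp only [Equiv.Perm.mul_apply, hs, ih hx]

/-- In `S(ℕ)` with the pointwise convergence topology, the sequence of transpositions
`b n = (n, n+1)` is Cauchy productive but not productive: the partial products form a
left Cauchy sequence which does not converge. -/
theorem stmt_4 :
    CauchyProductive (fun n => Equiv.swap n (n + 1)) ∧
    ¬ ∃ σ : Equiv.Perm ℕ,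
        Tendsto (fun n => partProd (fun k => Equiv.swap k (k + 1)) (n + 1)) atTop (𝓝 σ) := by
  have hb : (fun n => Equiv.swap n (n + 1)) = sw := rfl
  constructor
  · rw [hb]
    intro U hU
    rw [nhds_induced, Filter.mem_comap] at hU
    obtain ⟨s, hs, hsU⟩ := hU
    rw [nhds_pi, Filter.mem_pi] at hs
    obtain ⟨I, hIfin, t, ht, hts⟩ := hs
    obtain ⟨n, hn⟩ := hIfin.bddAbove
    refine ⟨n + 1, fun k hk l hl => ?_⟩
    apply hsU
    show ((partProd sw (k + 1))⁻¹ * partProd sw (l + 1) : Equiv.Perm ℕ) ∈ _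
    apply hts
    intro i hi
    have hin : i ≤ n := hn hi
    have h1 : partProd sw (k + 1) i = i + 1 := pp_apply (by omega)
    have h2 : partProd sw (l + 1) i = i + 1 := pp_apply (by omega)
    have key : ((partProd sw (k + 1))⁻¹ * partProd sw (l + 1)) i = i := by
      have : ((partProd sw (k + 1))⁻¹ * partProd sw (l + 1)) i
          = (partProd sw (k + 1))⁻¹ (partProd sw (l + 1) i) := rfl
      rw [this, h2, ← h1, Equiv.Perm.inv_def, Equiv.symm_apply_apply]
    show ((partProd sw (k + 1))⁻¹ * partProd sw (l + 1) : Equiv.Perm ℕ) i ∈ t i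
    rw [key]
    have := mem_of_mem_nhds (ht i)
    simpa using this
  · rintro ⟨σ, hσ⟩
    rw [hb] at hσ
    have hc : Tendsto (fun m => ((partProd sw (m + 1) : Equiv.Perm ℕ) : ℕ → ℕ))
        atTop (𝓝 (σ : ℕ → ℕ)) := by
      exact ((continuous_induced_dom.tendsto σ).comp hσ)
    have hpt : ∀ x : ℕ, Tendsto (fun m => partProd sw (m + 1) x) atTop (𝓝 (σ x)) :=
      tendsto_pi_nhds.mp hc
    have hval : ∀ x : ℕ, σ x = x + 1 := by
      intro x
      have hconst : Tendsto (fun m : ℕ => partProd sw (m + 1) x) atTop (𝓝 (x + 1)) := by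
        apply Tendsto.congr' _ tendsto_const_nhds
        filter_upwards [Filter.eventually_ge_atTop x] with m hm
        exact (pp_apply (by omega)).symm
      exact tendsto_nhds_unique (hpt x) hconst
    obtain ⟨y, hy⟩ := σ.surjective 0
    have := hval y
    omega
end

section
/- An NSS topological group contains no f_ω-Cauchy productive sequences: if G is NSS, then for every faithfully indexed sequence {a_n} in G there exists a function z : ℕ → ℤ such that the sequence {a_n^{z(n)}} is not Cauchy productive. -/
open Filter Topology

/-- A topological group has no small subgroups (NSS) if some neighborhood of the identity
contains no nontrivial subgroup. -/
def NSS (G : Type*) [Group G] [TopologicalSpace G] : Prop :=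
  ∃ U ∈ 𝓝 (1 : G), ∀ H : Subgroup G, (H : Set G) ⊆ U → H = ⊥

/-- An NSS group contains no `f_ω`-Cauchy productive sequences: for every faithfully indexed
sequence `a` there is `z : ℕ → ℤ` such that `fun n => a n ^ z n` is not Cauchy productive. -/
theorem stmt_5 {G : Type*} [Group G] [TopologicalSpace G] [IsTopologicalGroup G]
    (hG : NSS G) (a : ℕ → G) (ha : Function.Injective a) :
    ∃ z : ℕ → ℤ, ¬ CauchyProductive (fun n => a n ^ z n) := by
  obtain ⟨U, hU, hsub⟩ := hG
  have key : ∀ n, a n ≠ 1 → ∃ m : ℤ, a n ^ m ∉ U := by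
    intro n hn
    by_contra h
    push_neg at h
    have hs : (Subgroup.zpowers (a n) : Set G) ⊆ U := by
      rintro x ⟨m, rfl⟩
      exact h m
    have hb := hsub _ hs
    have : a n ∈ (⊥ : Subgroup G) := hb ▸ Subgroup.mem_zpowers (a n)
    exact hn (Subgroup.mem_bot.mp this)
  classical
  set z : ℕ → ℤ := fun n => if h : a n ≠ 1 then (key n h).choose else 0 with hz
  refine ⟨z, ?_⟩
  intro hC
  obtain ⟨N, hN⟩ := hC U hU
  have hone : ∀ k, a k ≠ 1 → a k ^ z k ∉ U := by
    intro k hk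
    simp only [hz, dif_pos hk]
    exact (key _ hk).choose_spec
  have hstep : ∀ k, (partProd (fun n => a n ^ z n) (k+1))⁻¹ *
      partProd (fun n => a n ^ z n) (k+2) = a (k+1) ^ z (k+1) := by
    intro k
    have h2 : partProd (fun n => a n ^ z n) (k+2) =
        partProd (fun n => a n ^ z n) (k+1) * a (k+1) ^ z (k+1) := by
      simp [partProd, List.range_succ, mul_assoc]
    rw [h2, inv_mul_cancel_left]
  by_cases hN1 : a (N+1) = 1
  · have hN2 : a (N+2) ≠ 1 := by
      intro h
      have := ha (hN1.trans h.symm)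
      omega
    have hmem := hN (N+1) (by omega) (N+2) (by omega)
    simp only [hstep (N+1)] at hmem
    exact hone _ hN2 hmem
  · have hmem := hN N (le_refl N) (N+1) (by omega)
    simp only [hstep N] at hmem
    exact hone _ hN1 hmem
end

section
/- If f : ℕ → ℕ is a function and a sequence {a_n} in an abelian topological group G is f*-summable (meaning {z(n)·a_n} is summable for every z : ℕ → ℕ with z ≤ f pointwise), then {a_n} is f-summable (meaning {z(n)·a_n} is summable for every z : ℕ → ℤ with |z| ≤ f pointwise). -/
open Filter Topology

def partSum {G : Type*} [AddCommMonoid G] (c : ℕ → G) (n : ℕ) : G :=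
  ∑ i ∈ Finset.range (n + 1), c i

/-- A sequence is summable if its sequence of partial sums converges. -/
def SummableSeq {G : Type*} [AddCommMonoid G] [TopologicalSpace G] (c : ℕ → G) : Prop :=
  ∃ s : G, Tendsto (fun n => partSum c n) atTop (𝓝 s)

/-- If a sequence `a` in an abelian topological group is `f*`-summable
(`fun n => z n • a n` is summable for every `z : ℕ → ℕ` with `z ≤ f`), then it is
`f`-summable (`fun n => z n • a n` is summable for every `z : ℕ → ℤ` with `|z| ≤ f`). -/
theorem stmt_6 {G : Type*} [AddCommGroup G] [TopologicalSpace G] [IsTopologicalAddGroup G]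
    (f : ℕ → ℕ) (a : ℕ → G)
    (h : ∀ z : ℕ → ℕ, (∀ n, z n ≤ f n) → SummableSeq (fun n => (z n : ℤ) • a n)) :
    ∀ z : ℕ → ℤ, (∀ n, (z n).natAbs ≤ f n) → SummableSeq (fun n => z n • a n) := by
  intro z hz
  set p : ℕ → ℕ := fun n => (z n).toNat with hp
  set q : ℕ → ℕ := fun n => (-z n).toNat with hq
  have hpf : ∀ n, p n ≤ f n := fun n => by
    have := hz n; simp only [hp]; omega
  have hqf : ∀ n, q n ≤ f n := fun n => by
    have := hz n; simp only [hq]; omega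
  obtain ⟨s, hs⟩ := h p hpf
  obtain ⟨t, ht⟩ := h q hqf
  refine ⟨s - t, ?_⟩
  have key : ∀ n, partSum (fun n => z n • a n) n =
      partSum (fun n => (p n : ℤ) • a n) n - partSum (fun n => (q n : ℤ) • a n) n := by
    intro n
    simp only [partSum, ← Finset.sum_sub_distrib, ← sub_smul]
    congr 1
    ext i
    congr 1
    have : (p i : ℤ) - q i = z i := by simp only [hp, hq]; omega
    rw [this]
  simpa only [key] using hs.sub ht
end

section
/- Let {U_j : j ∈ ℕ} be a family of subsets of a group G such that e ∈ U_{j+1} and U_{j+1}·U_{j+1}·U_{j+1} ⊆ U_j for every j ∈ ℕ. If n ∈ ℕ and φ : {0,…,n} → ℕ∖{0} is injective, then U_{φ(0)}·U_{φ(1)}···U_{φ(n)} ⊆ U_{k−1}, where k = min{φ(j) : j = 0,…,n}. -/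
open Pointwise

private lemma key_lemma {G : Type*} [Group G] (U : ℕ → Set G)
    (hone : ∀ j : ℕ, (1 : G) ∈ U (j + 1))
    (hcube : ∀ j : ℕ, U (j + 1) * U (j + 1) * U (j + 1) ⊆ U j) :
    ∀ N (l : List (ℕ × G)), l.length ≤ N →
    (l.map Prod.fst).Nodup →
    (∀ p ∈ l, p.1 ≠ 0) → (∀ p ∈ l, p.2 ∈ U p.1) →
    ∀ k, k ∈ l.map Prod.fst → (∀ a ∈ l.map Prod.fst, k ≤ a) →
    (l.map Prod.snd).prod ∈ U (k - 1) := by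
  have hstep : ∀ j, U (j + 1) ⊆ U j := by
    intro j a ha
    exact hcube j (by simpa using Set.mul_mem_mul (Set.mul_mem_mul (hone j) (hone j)) ha)
  have hmono : ∀ {i j : ℕ}, i ≤ j → U j ⊆ U i := fun h => antitone_nat_of_succ_le hstep h
  intro N
  induction N with
  | zero =>
    intro l hl _ _ _ k hk _
    rw [Nat.le_zero, List.length_eq_zero_iff] at hl
    subst hl; simp at hk
  | succ N ih =>
    intro l hl hnd h0 hU k hk hle
    obtain ⟨p, hp, hpk⟩ : ∃ p ∈ l, p.1 = k := by
      simpa using List.mem_map.1 hk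
    obtain ⟨l₁, l₂, rfl⟩ := List.append_of_mem hp
    have hk0 : k ≠ 0 := hpk ▸ h0 p hp
    have hk1 : k - 1 + 1 = k := Nat.succ_pred_eq_of_pos (Nat.pos_of_ne_zero hk0)
    have side : ∀ (l' : List (ℕ × G)), l'.length ≤ N →
        (l'.map Prod.fst).Nodup →
        (∀ q ∈ l', q.1 ≠ 0) → (∀ q ∈ l', q.2 ∈ U q.1) →
        (∀ a ∈ l'.map Prod.fst, k + 1 ≤ a) →
        (l'.map Prod.snd).prod ∈ U k := by
      intro l' h1 h2 h3 h4 h5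
      rcases List.eq_nil_or_concat l' with rfl | hne'
      · simpa using hk1 ▸ hone (k - 1)
      · have hne : (l'.map Prod.fst) ≠ [] := by
          obtain ⟨l'', b, rfl⟩ := hne'; simp
        have hsne : (l'.map Prod.fst).toFinset.Nonempty := by
          simpa [List.toFinset_eq_empty_iff] using hne
        set k₁ := (l'.map Prod.fst).toFinset.min' hsne with hk₁
        have hk₁mem : k₁ ∈ l'.map Prod.fst := by
          have := (l'.map Prod.fst).toFinset.min'_mem hsne
          simpa using this
        have hk₁le : ∀ a ∈ l'.map Prod.fst, k₁ ≤ a := fun a ha =>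
          Finset.min'_le _ a (by simpa using ha)
        have hkk : k + 1 ≤ k₁ := h5 _ hk₁mem
        exact hmono (by omega) (ih l' h1 h2 h3 h4 k₁ hk₁mem hk₁le)
    -- lengths
    have hlen1 : l₁.length ≤ N := by simp at hl; omega
    have hlen2 : l₂.length ≤ N := by simp at hl; omega
    -- nodup structure
    simp only [List.map_append, List.map_cons, List.nodup_append, List.nodup_cons] at hnd
    obtain ⟨hnd₁, ⟨hknl₂, hnd₂⟩, hdisj⟩ := hnd
    -- bounds
    have hb₁ : ∀ a ∈ l₁.map Prod.fst, k + 1 ≤ a := by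
      intro a ha
      have h1 : k ≤ a := hle a (by simp [List.mem_append] at ha ⊢; tauto)
      have h2 : a ≠ k := by
        intro h
        rw [h] at ha
        exact hdisj k ha k (by simp [hpk]) rfl
      omega
    have hb₂ : ∀ a ∈ l₂.map Prod.fst, k + 1 ≤ a := by
      intro a ha
      have h1 : k ≤ a := hle a (by simp [List.mem_append] at ha ⊢; tauto)
      have h2 : a ≠ k := by
        intro h; rw [h] at ha; rw [hpk] at hknl₂; exact hknl₂ ha
      omega
    have m₁ : (l₁.map Prod.snd).prod ∈ U k :=
      side l₁ hlen1 hnd₁ (fun q hq => h0 q (by simp [hq])) (fun q hq => hU q (by simp [hq])) hb₁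
    have m₂ : (l₂.map Prod.snd).prod ∈ U k :=
      side l₂ hlen2 hnd₂ (fun q hq => h0 q (by simp [hq])) (fun q hq => hU q (by simp [hq])) hb₂
    have mp : p.2 ∈ U k := hpk ▸ hU p hp
    have : (l₁.map Prod.snd).prod * p.2 * (l₂.map Prod.snd).prod ∈ U (k - 1) := by
      apply hcube (k - 1)
      rw [hk1]
      exact Set.mul_mem_mul (Set.mul_mem_mul m₁ mp) m₂
    simpa [List.prod_append, mul_assoc] using this

/-- If `1 ∈ U (j+1)` and `U (j+1) * U (j+1) * U (j+1) ⊆ U j` for all `j`, and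
`φ : Fin (n+1) → ℕ \ {0}` is injective, then any ordered product of elements
`x j ∈ U (φ j)` lies in `U (k - 1)`, where `k = min φ`. -/
theorem stmt_7 {G : Type*} [Group G] (U : ℕ → Set G)
    (hone : ∀ j : ℕ, (1 : G) ∈ U (j + 1))
    (hcube : ∀ j : ℕ, U (j + 1) * U (j + 1) * U (j + 1) ⊆ U j)
    (n : ℕ) (φ : Fin (n + 1) → ℕ) (hφ : Function.Injective φ) (h0 : ∀ j, φ j ≠ 0)
    (x : Fin (n + 1) → G) (hx : ∀ j, x j ∈ U (φ j)) :
    (List.ofFn x).prod ∈ U (Finset.univ.inf' Finset.univ_nonempty φ - 1) := by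
  set k := Finset.univ.inf' Finset.univ_nonempty φ with hk
  set l : List (ℕ × G) := List.ofFn (fun j => (φ j, x j)) with hldef
  have hfst : l.map Prod.fst = List.ofFn φ := by simp [hldef, List.map_ofFn, Function.comp_def]
  have hsnd : l.map Prod.snd = List.ofFn x := by simp [hldef, List.map_ofFn, Function.comp_def]
  have hkmem : k ∈ l.map Prod.fst := by
    obtain ⟨j, _, hj⟩ := Finset.exists_mem_eq_inf' (Finset.univ_nonempty) φ
    rw [hfst, List.mem_ofFn]
    exact ⟨j, hj.symm⟩
  have hkle : ∀ a ∈ l.map Prod.fst, k ≤ a := by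
    rw [hfst]
    intro a ha
    obtain ⟨j, hj⟩ := List.mem_ofFn.1 ha
    exact hj ▸ Finset.inf'_le _ (Finset.mem_univ j)
  have hnd : (l.map Prod.fst).Nodup := by
    rw [hfst]; exact (List.nodup_ofFn).2 hφ
  have := key_lemma U hone hcube l.length l le_rfl hnd
    (by rintro p hp; rw [hldef] at hp; obtain ⟨j, hj⟩ := List.mem_ofFn.1 hp
        exact hj ▸ h0 j)
    (by rintro p hp; rw [hldef] at hp; obtain ⟨j, hj⟩ := List.mem_ofFn.1 hp
        exact hj ▸ hx j)
    k hkmem hkle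
  rwa [hsnd] at this
end

section
/- Let G be a metric topological group with a base {U_n : n ∈ ℕ} of symmetric open neighborhoods of the identity satisfying U_{n+1}·U_{n+1}·U_{n+1} ⊆ U_n for all n, let f : ℕ → ℕ∖{0}, and let {a_n} be a faithfully indexed sequence with {a_n^z : z ∈ ℤ, |z| ≤ f(n)} ⊆ U_n for every n. Then for every bijection φ : ℕ → ℕ and every z : ℕ → ℤ with |z(n)| ≤ f(φ(n)) for all n, the sequence {a_{φ(n)}^{z(n)}} is Cauchy productive. -/
open Filter Topology Pointwise

lemma key_lemma_s8 {G : Type*} [Group G] (U : ℕ → Set G)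
    (hone : ∀ n, (1:G) ∈ U n)
    (hcube : ∀ n, U (n + 1) * U (n + 1) * U (n + 1) ⊆ U n)
    (hmono : ∀ m k, m ≤ k → U k ⊆ U m)
    (ι : ℕ → ℕ) (c : ℕ → G) (hc : ∀ n, c n ∈ U (ι n)) :
    ∀ (s m : ℕ) (L : List ℕ), L.length ≤ s → (L.map ι).Nodup →
      (∀ n ∈ L, m + 1 ≤ ι n) → (L.map c).prod ∈ U m := by
  intro s
  induction s with
  | zero =>
    intro m L hL _ _
    have : L = [] := List.eq_nil_of_length_eq_zero (Nat.le_zero.mp hL)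
    simp [this, hone]
  | succ s ih =>
    intro m L hL hnd hge
    rcases List.eq_nil_or_concat L with rfl | _
    · simp [hone]
    have hne : L ≠ [] := by rename_i h; rcases h with ⟨a,b,rfl⟩; simp
    have hFne : ((L.map ι).toFinset).Nonempty := by
      simp [List.toFinset_nonempty_iff, hne]
    set j := ((L.map ι).toFinset).min' hFne with hj
    have hjmem : j ∈ L.map ι := List.mem_toFinset.mp (Finset.min'_mem _ hFne)
    have hjle : ∀ i ∈ L.map ι, j ≤ i := fun i hi =>
      Finset.min'_le _ _ (List.mem_toFinset.mpr hi)
    obtain ⟨n, hnL, hιn⟩ := List.mem_map.mp hjmem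
    obtain ⟨s1, s2, rfl⟩ := List.append_of_mem hnL
    rw [List.map_append, List.map_cons] at hnd
    rw [List.nodup_append] at hnd
    obtain ⟨h1, h2, hdisj⟩ := hnd
    rw [List.nodup_cons] at h2
    have hlen1 : s1.length ≤ s := by
      have := hL; simp [List.length_append] at this; omega
    have hlen2 : s2.length ≤ s := by
      have := hL; simp [List.length_append] at this; omega
    have hjm : m + 1 ≤ j := hιn ▸ hge n (by simp)
    have hs1 : ∀ p ∈ s1, j + 1 ≤ ι p := by
      intro p hp
      have hle : j ≤ ι p := hjle _ (List.mem_map_of_mem (f := ι) (by simp [hp]))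
      have hne' : ι p ≠ j := by
        intro h
        exact hdisj (ι p) (List.mem_map_of_mem (f := ι) hp) (ι n) (by simp) (h.trans hιn.symm)
      omega
    have hs2 : ∀ p ∈ s2, j + 1 ≤ ι p := by
      intro p hp
      have hle : j ≤ ι p := hjle _ (List.mem_map_of_mem (f := ι) (by simp [hp]))
      have hne' : ι p ≠ j := by
        intro h
        have heq : ι n = ι p := by rw [hιn, h]
        exact h2.1 (heq ▸ List.mem_map_of_mem (f := ι) hp)
      omega
    have P1 : (s1.map c).prod ∈ U j := ih j s1 hlen1 h1 hs1
    have P2 : (s2.map c).prod ∈ U j := ih j s2 hlen2 h2.2 hs2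
    have Pc : c n ∈ U j := hιn ▸ hc n
    have hprod : ((s1 ++ n :: s2).map c).prod
        = (s1.map c).prod * c n * (s2.map c).prod := by
      simp [List.map_append, List.prod_append, mul_assoc]
    rw [hprod]
    obtain ⟨j', hj'⟩ : ∃ j', j = j' + 1 := ⟨j - 1, by omega⟩
    rw [hj'] at P1 P2 Pc hjm
    exact hmono m j' (by omega)
      (hcube j' (Set.mul_mem_mul (Set.mul_mem_mul P1 Pc) P2))

lemma partProd_add {G : Type*} [Monoid G] (b : ℕ → G) (k d : ℕ) :
    partProd b (k + d) = partProd b k * ((List.range' k d).map b).prod := by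
  induction d with
  | zero => simp [partProd]
  | succ d ih =>
    rw [← Nat.add_assoc, show k + d + 1 = (k+d) + 1 from rfl]
    unfold partProd at *
    rw [List.range_succ, List.range'_concat]
    simp [List.map_append, List.prod_append, ih, mul_assoc]

/-- Building `f`-Cauchy productive sets in a metric group: given a base `{U n}` of symmetric
open neighborhoods of the identity with `U (n+1)³ ⊆ U n` and a faithfully indexed sequence
`a` with `{a n ^ z : |z| ≤ f n} ⊆ U n`, for every bijection `φ` of `ℕ` and every `z : ℕ → ℤ`
with `|z n| ≤ f (φ n)` the sequence `fun n => a (φ n) ^ z n` is Cauchy productive. -/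
theorem stmt_8 {G : Type*} [Group G] [TopologicalSpace G] [IsTopologicalGroup G]
    [TopologicalSpace.MetrizableSpace G]
    (U : ℕ → Set G)
    (hnhds : ∀ n, U n ∈ 𝓝 (1 : G)) (hopen : ∀ n, IsOpen (U n))
    (hsymm : ∀ n, (U n)⁻¹ = U n)
    (hbase : ∀ V ∈ 𝓝 (1 : G), ∃ n, U n ⊆ V)
    (hcube : ∀ n, U (n + 1) * U (n + 1) * U (n + 1) ⊆ U n)
    (f : ℕ → ℕ) (hf : ∀ n, 0 < f n)
    (a : ℕ → G) (hinj : Function.Injective a)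
    (hin : ∀ n, ∀ z : ℤ, z.natAbs ≤ f n → a n ^ z ∈ U n)
    (φ : ℕ → ℕ) (hφ : Function.Bijective φ)
    (z : ℕ → ℤ) (hz : ∀ n, (z n).natAbs ≤ f (φ n)) :
    CauchyProductive (fun n => a (φ n) ^ z n) := by
  unfold CauchyProductive LeftCauchy
  set b : ℕ → G := fun n => a (φ n) ^ z n with hb
  have hone : ∀ n, (1:G) ∈ U n := fun n => mem_of_mem_nhds (hnhds n)
  have hstep : ∀ k, U (k + 1) ⊆ U k := by
    intro k x hx
    have := hcube k (Set.mul_mem_mul (Set.mul_mem_mul (hone _) (hone _)) hx)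
    rwa [one_mul, one_mul] at this
  have hmono : ∀ m k, m ≤ k → U k ⊆ U m := by
    intro m k h
    induction h with
    | refl => exact subset_rfl
    | step h ih => exact (hstep _).trans ih
  intro V hV
  obtain ⟨m, hm⟩ := hbase V hV
  set e := Equiv.ofBijective φ hφ with he
  set N := ((Finset.range (m+1)).sup fun i => e.symm i) + 1 with hN
  refine ⟨N, ?_⟩
  have hbig : ∀ n, N ≤ n → m + 1 ≤ φ n := by
    intro n hn
    by_contra h
    push_neg at h
    have h1 : e.symm (φ n) ≤ (Finset.range (m+1)).sup fun i => e.symm i :=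
      Finset.le_sup (Finset.mem_range.mpr h)
    have h2 : e.symm (φ n) = n := e.symm_apply_apply n
    omega
  have main : ∀ k l, N ≤ k → k ≤ l →
      (partProd b (k+1))⁻¹ * partProd b (l+1) ∈ U m := by
    intro k l hk hkl
    have hd : l + 1 = (k + 1) + (l - k) := by omega
    rw [hd, partProd_add b (k+1) (l-k), ← mul_assoc, inv_mul_cancel, one_mul]
    apply key_lemma_s8 U hone hcube hmono φ b (fun n => hin (φ n) (z n) (hz n)) (l - k) m
    · simp
    · exact List.Nodup.map hφ.1 (List.nodup_range' (h := Nat.one_pos))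
    · intro n hn
      have := List.mem_range'_1.mp hn
      exact hbig n (by omega)
  intro k hk l hl
  rcases le_total k l with h | h
  · exact hm (main k l hk h)
  · have h1 := main l k hl h
    have h2 : ((partProd b (l+1))⁻¹ * partProd b (k+1))⁻¹ ∈ (U m)⁻¹ :=
      Set.inv_mem_inv.mpr h1
    rw [hsymm] at h2
    rw [mul_inv_rev, inv_inv] at h2
    exact hm h2
end

section
/- A metrizable topological group G is NSS if and only if G contains no f_ω-Cauchy productive sequence. -/
open Filter Topology

/-- A faithfully indexed sequence is `f_ω`-Cauchy productive if `fun n => a n ^ z n`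
is Cauchy productive for every `z : ℕ → ℤ`. -/
def FOmegaCauchyProductive {G : Type*} [Group G] [TopologicalSpace G] (a : ℕ → G) : Prop :=
  Function.Injective a ∧ ∀ z : ℕ → ℤ, CauchyProductive (fun n => a n ^ z n)

lemma partProd_succ' {G : Type*} [Monoid G] (b : ℕ → G) (n : ℕ) :
    partProd b (n + 1) = partProd b n * b n := by
  simp [partProd, List.range_succ]

/-- dependent recursion with choice -/
lemma dep_rec_choice' {α : Type*} (P : α → Prop) (R : ℕ → α → α → Prop)
    (h0 : ∃ a, P a) (hs : ∀ n a, P a → ∃ b, P b ∧ R n a b) :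
    ∃ f : ℕ → α, (∀ n, P (f n)) ∧ ∀ n, R n (f n) (f (n + 1)) := by
  obtain ⟨a0, ha0⟩ := h0
  choose g hg1 hg2 using hs
  let f : ℕ → {a // P a} := fun n =>
    Nat.rec ⟨a0, ha0⟩ (fun n p => ⟨g n p.1 p.2, hg1 n p.1 p.2⟩) n
  exact ⟨fun n => (f n).1, fun n => (f n).2, fun n => hg2 n (f n).1 (f n).2⟩

/-- A metrizable topological group is NSS iff it contains no `f_ω`-Cauchy productive
sequence. -/
theorem stmt_10 {G : Type*} [Group G] [TopologicalSpace G] [IsTopologicalGroup G]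
    [TopologicalSpace.MetrizableSpace G] :
    NSS G ↔ ¬ ∃ a : ℕ → G, FOmegaCauchyProductive a := by
  constructor
  · -- NSS → no f_ω-Cauchy productive sequence
    rintro ⟨U, hU, hUb⟩ ⟨a, hinj, hz⟩
    -- For each z, the terms a n ^ z n eventually lie in U
    have hterm : ∀ z : ℕ → ℤ, ∃ N, ∀ m ≥ N + 1, a m ^ z m ∈ U := by
      intro z
      obtain ⟨N, hN⟩ := hz z U hU
      refine ⟨N, fun m hm => ?_⟩
      have h1 : m - 1 ≥ N := by omega
      have h2 : m ≥ N := by omega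
      have key := hN (m - 1) h1 m h2
      have hmsub : m - 1 + 1 = m := by omega
      simp only [hmsub] at key
      rw [partProd_succ'] at key
      simpa using key
    by_cases hev : ∃ n0 : ℕ, ∀ n ≥ n0, ∀ k : ℤ, a n ^ k ∈ U
    · obtain ⟨n0, hn0⟩ := hev
      have hone : ∀ n ≥ n0, a n = 1 := by
        intro n hn
        have hsub : ((Subgroup.zpowers (a n) : Subgroup G) : Set G) ⊆ U := by
          rintro g ⟨k, rfl⟩
          exact hn0 n hn k
        have := hUb _ hsub
        rwa [Subgroup.zpowers_eq_bot] at this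
      have : a n0 = a (n0 + 1) := by rw [hone n0 le_rfl, hone (n0+1) (by omega)]
      exact absurd (hinj this) (by omega)
    · push_neg at hev
      classical
      set z : ℕ → ℤ := fun n => if h : ∃ k : ℤ, a n ^ k ∉ U then h.choose else 0 with hzdef
      obtain ⟨N, hN⟩ := hterm z
      obtain ⟨n, hn, k, hk⟩ := hev (N + 1)
      have hex : ∃ k : ℤ, a n ^ k ∉ U := ⟨k, hk⟩
      have hbad : a n ^ z n ∉ U := by
        simp only [hzdef, dif_pos hex]
        exact hex.choose_spec
      exact hbad (hN n hn)
  · -- no sequence → NSS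
    intro hno
    by_contra hNSS
    apply hno
    rw [NSS] at hNSS
    push_neg at hNSS
    obtain ⟨V, hV⟩ := (𝓝 (1 : G)).exists_antitone_basis
    -- Good p : p.1 is a symmetric neighborhood of 1 containing all integer powers of p.2 ≠ 1
    have hsub : ∀ T ∈ 𝓝 (1 : G), ∃ p : Set G × G,
        (p.1 ∈ 𝓝 (1 : G) ∧ (∀ g ∈ p.1, g⁻¹ ∈ p.1) ∧ p.2 ≠ 1 ∧ ∀ k : ℤ, p.2 ^ k ∈ p.1)
        ∧ p.1 ⊆ T := by
      intro T hT
      have hS : T ∩ T⁻¹ ∈ 𝓝 (1 : G) := Filter.inter_mem hT (inv_mem_nhds_one G hT)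
      obtain ⟨H, hHS, hHbot⟩ := hNSS _ hS
      obtain ⟨x, hxH, hx1⟩ : ∃ x ∈ H, x ≠ 1 := by
        rw [Subgroup.ne_bot_iff_exists_ne_one] at hHbot
        obtain ⟨⟨x, hx⟩, h1⟩ := hHbot
        exact ⟨x, hx, by simpa using h1⟩
      refine ⟨(T ∩ T⁻¹, x), ⟨hS, ?_, hx1, fun k => hHS (H.zpow_mem hxH k)⟩,
        fun g hg => hg.1⟩
      rintro g ⟨hg1, hg2⟩
      exact ⟨hg2, by simpa using hg1⟩
    have h0 : ∃ p : Set G × G,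
        p.1 ∈ 𝓝 (1 : G) ∧ (∀ g ∈ p.1, g⁻¹ ∈ p.1) ∧ p.2 ≠ 1 ∧ ∀ k : ℤ, p.2 ^ k ∈ p.1 := by
      obtain ⟨p, hp, -⟩ := hsub Set.univ Filter.univ_mem
      exact ⟨p, hp⟩
    have hs : ∀ (n : ℕ) (p : Set G × G),
        (p.1 ∈ 𝓝 (1 : G) ∧ (∀ g ∈ p.1, g⁻¹ ∈ p.1) ∧ p.2 ≠ 1 ∧ ∀ k : ℤ, p.2 ^ k ∈ p.1) →
        ∃ q : Set G × G,
          (q.1 ∈ 𝓝 (1 : G) ∧ (∀ g ∈ q.1, g⁻¹ ∈ q.1) ∧ q.2 ≠ 1 ∧ ∀ k : ℤ, q.2 ^ k ∈ q.1) ∧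
          (q.1 ⊆ V (n + 1) ∧ (∀ u ∈ q.1, ∀ v ∈ q.1, u * v ∈ p.1) ∧ p.2 ∉ q.1) := by
      intro n p hp
      obtain ⟨U', hU', hU'mul⟩ := exists_nhds_one_split hp.1
      have hxc : ({p.2}ᶜ : Set G) ∈ 𝓝 (1 : G) := compl_singleton_mem_nhds (Ne.symm hp.2.2.1)
      have hVm : V (n + 1) ∈ 𝓝 (1 : G) := hV.toHasBasis.mem_of_mem trivial
      have hT : U' ∩ V (n + 1) ∩ {p.2}ᶜ ∈ 𝓝 (1 : G) :=
        Filter.inter_mem (Filter.inter_mem hU' hVm) hxc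
      obtain ⟨q, hq, hqT⟩ := hsub _ hT
      refine ⟨q, hq, fun g hg => (hqT hg).1.2,
        fun u hu v hv => hU'mul u (hqT hu).1.1 v (hqT hv).1.1,
        fun hmem => (hqT hmem).2 rfl⟩
    obtain ⟨f, hGood, hR⟩ := dep_rec_choice' _ _ h0 hs
    refine ⟨fun n => (f n).2, ?_, ?_⟩
    · -- injectivity
      have hnest : ∀ n, (f (n + 1)).1 ⊆ (f n).1 := by
        intro n g hg
        have h1 : (1 : G) ∈ (f (n + 1)).1 := mem_of_mem_nhds (hGood (n + 1)).1
        simpa using (hR n).2.1 g hg 1 h1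
      have hmono : ∀ m n : ℕ, m ≤ n → (f n).1 ⊆ (f m).1 := by
        intro m n h
        induction n, h using Nat.le_induction with
        | base => exact subset_rfl
        | succ n hmn ih => exact (hnest n).trans ih
      have hmem : ∀ n, (f n).2 ∈ (f n).1 := by
        intro n
        have := (hGood n).2.2.2 1
        simpa using this
      have key : ∀ m n : ℕ, m < n → (f m).2 ≠ (f n).2 := by
        intro m n hmn heq
        have h1 : (f n).2 ∈ (f (m + 1)).1 := hmono (m + 1) n hmn (hmem n)
        rw [← heq] at h1
        exact (hR m).2.2 h1
      intro m n heq
      rcases lt_trichotomy m n with h | h | h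
      · exact absurd heq (key m n h)
      · exact h
      · exact absurd heq.symm (key n m h)
    · -- Cauchy productivity
      intro z
      set b : ℕ → G := fun n => (f n).2 ^ z n with hbdef
      have hb : ∀ n, b n ∈ (f n).1 := fun n => (hGood n).2.2.2 (z n)
      have prodlem : ∀ d k : ℕ,
          (partProd b (k + 1))⁻¹ * partProd b (k + d + 1) ∈ (f k).1 := by
        intro d
        induction d with
        | zero =>
          intro k
          simpa using mem_of_mem_nhds (hGood k).1
        | succ d ih =>
          intro k
          have hkey : (partProd b (k + 1))⁻¹ * partProd b (k + (d + 1) + 1) =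
              b (k + 1) * ((partProd b (k + 1 + 1))⁻¹ * partProd b (k + 1 + d + 1)) := by
            have h1 : k + (d + 1) + 1 = k + 1 + d + 1 := by ring
            rw [h1, partProd_succ' b (k + 1), mul_inv_rev]
            group
          rw [hkey]
          exact (hR k).2.1 _ (hb (k + 1)) _ (ih (k + 1))
      intro U hU
      obtain ⟨m, -, hm⟩ := hV.toHasBasis.mem_iff.mp hU
      have hWle : ∀ j, j ≥ m + 1 → (f j).1 ⊆ U := by
        intro j hj
        obtain ⟨i, rfl⟩ : ∃ i, j = i + 1 := ⟨j - 1, by omega⟩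
        exact ((hR i).1.trans (hV.antitone (show m ≤ i + 1 by omega))).trans hm
      refine ⟨m + 1, fun k hk l hl => ?_⟩
      rcases le_or_gt k l with h | h
      · obtain ⟨d, rfl⟩ := Nat.exists_eq_add_of_le h
        exact hWle k hk (prodlem d k)
      · obtain ⟨d, hd⟩ := Nat.exists_eq_add_of_le h.le
        have h1 : (partProd b (l + 1))⁻¹ * partProd b (k + 1) ∈ (f l).1 := by
          rw [hd]; exact prodlem d l
        have h2 := (hGood l).2.1 _ h1
        rw [mul_inv_rev, inv_inv] at h2
        exact hWle l hl h2
end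

section
/- Let p be a prime and H a subgroup of the group ℤ_p of p-adic integers. If H contains an f_ω-summable set (i.e., H is not TAP) and H is infinite, then H = p^n·ℤ_p for some n ∈ ℕ; in particular H is open in ℤ_p. -/
open Filter Topology

def SumConverges {G : Type*} [AddCommMonoid G] [TopologicalSpace G] (c : ℕ → G) : Prop :=
  ∃ s : G, Tendsto (fun n => partSum c n) atTop (𝓝 s)

/-- A faithfully indexed set `{a n}` in an abelian topological group is `f_ω`-summable if
for every bijection `φ` of `ℕ` and every `z : ℕ → ℤ` the partial sums of
`fun n => z n • a (φ n)` converge. -/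
def FOmegaSummableSet {G : Type*} [AddCommGroup G] [TopologicalSpace G] (a : ℕ → G) : Prop :=
  Function.Injective a ∧
    ∀ φ : ℕ → ℕ, Function.Bijective φ → ∀ z : ℕ → ℤ,
      SumConverges (fun n => z n • a (φ n))

namespace Stmt18Aux
variable {p : ℕ} [Fact p.Prime]

lemma pow_dvd_iff_norm_le (x : ℤ_[p]) (n : ℕ) :
    (p : ℤ_[p]) ^ n ∣ x ↔ ‖x‖ ≤ ((p:ℝ)⁻¹) ^ n := by
  rw [← Ideal.mem_span_singleton, ← PadicInt.norm_le_pow_iff_mem_span_pow, inv_pow,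
    ← zpow_natCast, ← zpow_neg]

lemma p_inv_lt_one : ((p:ℝ)⁻¹) < 1 := by
  rw [inv_lt_one_iff₀]; right; exact_mod_cast (Fact.out : p.Prime).one_lt

lemma exists_int_close (c : ℤ_[p]) {ε : ℝ} (hε : 0 < ε) : ∃ z : ℤ, ‖c - z‖ ≤ ε := by
  obtain ⟨n, hn⟩ := exists_pow_lt_of_lt_one hε (p_inv_lt_one (p := p))
  refine ⟨(PadicInt.appr c n : ℤ), le_trans ?_ hn.le⟩
  rw [← pow_dvd_iff_norm_le]
  have := PadicInt.appr_spec n c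
  rw [Ideal.mem_span_singleton] at this
  exact_mod_cast this

lemma dvd_of_norm_le {β r : ℤ_[p]} (hr : ‖r‖ ≤ ‖β‖) (hβ : β ≠ 0) : β ∣ r := by
  set m := β.valuation with hm
  have hu := PadicInt.unitCoeff_spec hβ
  have hval : (β.valuation : ℤ) = (m : ℤ) := rfl
  have hnorm : ‖β‖ = ((p:ℝ)⁻¹) ^ m := by
    rw [PadicInt.norm_eq_zpow_neg_valuation hβ, hval, inv_pow, ← zpow_natCast, ← zpow_neg]
  obtain ⟨c, hc⟩ : (p : ℤ_[p]) ^ m ∣ r := by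
    rw [pow_dvd_iff_norm_le]
    exact hr.trans hnorm.le
  refine ⟨((PadicInt.unitCoeff hβ)⁻¹ : ℤ_[p]ˣ) * c, ?_⟩
  have h1 : ((PadicInt.unitCoeff hβ : ℤ_[p]) * ((PadicInt.unitCoeff hβ)⁻¹ : ℤ_[p]ˣ)) = 1 := by
    exact_mod_cast (PadicInt.unitCoeff hβ).mul_inv
  calc r = (p : ℤ_[p]) ^ m * c := hc
    _ = ((PadicInt.unitCoeff hβ : ℤ_[p]) * ((PadicInt.unitCoeff hβ)⁻¹ : ℤ_[p]ˣ)) *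
          ((p : ℤ_[p]) ^ m * c) := by rw [h1, one_mul]
    _ = ((PadicInt.unitCoeff hβ : ℤ_[p]) * (p : ℤ_[p]) ^ m) *
          (((PadicInt.unitCoeff hβ)⁻¹ : ℤ_[p]ˣ) * c) := by ring
    _ = β * (((PadicInt.unitCoeff hβ)⁻¹ : ℤ_[p]ˣ) * c) := by rw [← hu]

lemma approx_smul (β r : ℤ_[p]) (hr : ‖r‖ ≤ ‖β‖) {ε : ℝ} (hε : 0 < ε) :
    ∃ z : ℤ, ‖r - z • β‖ ≤ ε := by
  by_cases hβ : β = 0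
  · refine ⟨0, ?_⟩
    have : r = 0 := by
      have := hr; rw [hβ, norm_zero] at this
      exact norm_le_zero_iff.mp this
    simp [this, hε.le]
  · obtain ⟨c, hc⟩ := dvd_of_norm_le hr hβ
    obtain ⟨z, hz⟩ := exists_int_close (p := p) c hε
    refine ⟨z, ?_⟩
    have h2 : r - z • β = β * (c - z) := by rw [hc, zsmul_eq_mul]; ring
    rw [h2, norm_mul]
    calc ‖β‖ * ‖c - (z:ℤ_[p])‖ ≤ 1 * ‖c - (z:ℤ_[p])‖ :=
      mul_le_mul_of_nonneg_right (PadicInt.norm_le_one β) (norm_nonneg _)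
    _ = ‖c - (z:ℤ_[p])‖ := one_mul _
    _ ≤ ε := hz

lemma eps_pos (b : ℕ → ℤ_[p]) (hb : ∀ n, b n ≠ 0) (n : ℕ) :
    0 < min ((p:ℝ)⁻¹ ^ n) ‖b (n+1)‖ := by
  have hp : (0:ℝ) < p := by exact_mod_cast (Fact.out : p.Prime).pos
  exact lt_min (by positivity) (norm_pos_iff.mpr (hb (n+1)))

noncomputable def pick (b : ℕ → ℤ_[p]) (hb : ∀ n, b n ≠ 0) (n : ℕ) (r : ℤ_[p]) : ℤ :=
  if h : ‖r‖ ≤ ‖b n‖ then (approx_smul (b n) r h (eps_pos b hb n)).choose else 0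

lemma pick_spec (b : ℕ → ℤ_[p]) (hb : ∀ n, b n ≠ 0) (n : ℕ) (r : ℤ_[p])
    (h : ‖r‖ ≤ ‖b n‖) :
    ‖r - pick b hb n r • b n‖ ≤ min ((p:ℝ)⁻¹ ^ n) ‖b (n+1)‖ := by
  rw [pick, dif_pos h]
  exact (approx_smul (b n) r h (eps_pos b hb n)).choose_spec

noncomputable def rem (b : ℕ → ℤ_[p]) (hb : ∀ n, b n ≠ 0) (t : ℤ_[p]) : ℕ → ℤ_[p]
  | 0 => t
  | n+1 => rem b hb t n - pick b hb n (rem b hb t n) • b n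

lemma rem_inv (b : ℕ → ℤ_[p]) (hb : ∀ n, b n ≠ 0) (t : ℤ_[p]) (ht : ‖t‖ ≤ ‖b 0‖) :
    ∀ n, ‖rem b hb t n‖ ≤ ‖b n‖ := by
  intro n
  induction n with
  | zero => exact ht
  | succ n ih =>
    exact le_trans (pick_spec b hb n _ ih) (min_le_right _ _)

lemma rem_small (b : ℕ → ℤ_[p]) (hb : ∀ n, b n ≠ 0) (t : ℤ_[p]) (ht : ‖t‖ ≤ ‖b 0‖)
    (n : ℕ) : ‖rem b hb t (n+1)‖ ≤ (p:ℝ)⁻¹ ^ n :=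
  le_trans (pick_spec b hb n _ (rem_inv b hb t ht n)) (min_le_left _ _)

lemma partSum_rem (b : ℕ → ℤ_[p]) (hb : ∀ n, b n ≠ 0) (t : ℤ_[p]) (n : ℕ) :
    partSum (fun i => pick b hb i (rem b hb t i) • b i) n = t - rem b hb t (n+1) := by
  induction n with
  | zero => simp [partSum, rem]
  | succ n ih =>
    have hr : rem b hb t (n+1+1)
        = rem b hb t (n+1) - pick b hb (n+1) (rem b hb t (n+1)) • b (n+1) := rfl
    rw [partSum, Finset.sum_range_succ, ← partSum, ih, hr]
    abel

lemma rem_tendsto (b : ℕ → ℤ_[p]) (hb : ∀ n, b n ≠ 0) (t : ℤ_[p]) (ht : ‖t‖ ≤ ‖b 0‖) :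
    Tendsto (fun n => partSum (fun i => pick b hb i (rem b hb t i) • b i) n) atTop (𝓝 t) := by
  have hp0 : (0:ℝ) ≤ (p:ℝ)⁻¹ := by positivity
  have h0 : Tendsto (fun n => rem b hb t (n+1)) atTop (𝓝 0) := by
    apply squeeze_zero_norm (fun n => rem_small b hb t ht n)
    exact tendsto_pow_atTop_nhds_zero_of_lt_one hp0 (p_inv_lt_one (p := p))
  have := (tendsto_const_nhds (x := t)).sub h0
  rw [sub_zero] at this
  refine this.congr fun n => (partSum_rem b hb t n).symm

lemma ball_mem (H : AddSubgroup ℤ_[p]) (b : ℕ → ℤ_[p]) (hb : ∀ n, b n ≠ 0)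
    (hsum : ∀ z : ℕ → ℤ, ∃ s, s ∈ H ∧
      Tendsto (fun n => partSum (fun i => z i • b i) n) atTop (𝓝 s))
    (t : ℤ_[p]) (ht : ‖t‖ ≤ ‖b 0‖) : t ∈ H := by
  obtain ⟨s, hsH, hs⟩ := hsum (fun i => pick b hb i (rem b hb t i))
  rwa [tendsto_nhds_unique (rem_tendsto b hb t ht) hs]

end Stmt18Aux

open Stmt18Aux in
/-- If an infinite subgroup `H` of the `p`-adic integers `ℤ_p` contains an `f_ω`-summable
set (i.e. `H` is not TAP), then `H = p^n • ℤ_p` for some `n : ℕ`; in particular `H` is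
open in `ℤ_p`. -/
theorem stmt_18 (p : ℕ) [Fact p.Prime] (H : AddSubgroup ℤ_[p])
    (hinf : (H : Set ℤ_[p]).Infinite)
    (hnotTAP : ∃ a : ℕ → H, FOmegaSummableSet a) :
    ∃ n : ℕ, (H : Set ℤ_[p]) = {x : ℤ_[p] | ∃ y : ℤ_[p], x = (p : ℤ_[p]) ^ n * y} := by
  classical
  obtain ⟨a, hainj, hconv⟩ := hnotTAP
  set α : ℕ → ℤ_[p] := fun n => (a n : ℤ_[p]) with hα
  have hαmem : ∀ n, α n ∈ H := fun n => (a n).2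
  have hsumα : ∀ z : ℕ → ℤ, ∃ s, s ∈ H ∧
      Tendsto (fun n => partSum (fun i => z i • α i) n) atTop (𝓝 s) := by
    intro z
    obtain ⟨s, hs⟩ := hconv id Function.bijective_id z
    refine ⟨(s : ℤ_[p]), s.2, ?_⟩
    have h2 := (continuous_subtype_val.tendsto s).comp hs
    refine h2.congr fun n => ?_
    show ((partSum (fun i => z i • a (id i)) n : H) : ℤ_[p]) = _
    simp [partSum, hα]
  -- choose an offset so that the tail of `α` consists of nonzero elements
  obtain ⟨k0, hb0⟩ : ∃ k0 : ℕ, ∀ n, α (n + k0) ≠ 0 := by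
    by_cases hz : ∃ k, α k = 0
    · obtain ⟨k, hk⟩ := hz
      refine ⟨k + 1, fun n hn => ?_⟩
      have : a (n + (k + 1)) = a k := Subtype.ext (hn.trans hk.symm)
      have := hainj this
      omega
    · push_neg at hz; exact ⟨0, fun n => hz _⟩
  set b : ℕ → ℤ_[p] := fun n => α (n + k0) with hbdef
  have hbnz : ∀ n, b n ≠ 0 := hb0
  have hsumb : ∀ z : ℕ → ℤ, ∃ s, s ∈ H ∧
      Tendsto (fun n => partSum (fun i => z i • b i) n) atTop (𝓝 s) := by
    intro z
    set zh : ℕ → ℤ := fun m => if k0 ≤ m then z (m - k0) else 0 with hzh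
    obtain ⟨s, hsH, hs⟩ := hsumα zh
    refine ⟨s, hsH, ?_⟩
    have hshift := hs.comp (tendsto_add_atTop_nat k0)
    refine hshift.congr fun n => ?_
    show partSum (fun i => zh i • α i) (n + k0) = partSum (fun i => z i • b i) n
    rw [partSum, partSum]
    have he : n + k0 + 1 = k0 + (n + 1) := by omega
    rw [he, Finset.sum_range_add]
    have h1 : ∑ i ∈ Finset.range k0, zh i • α i = 0 :=
      Finset.sum_eq_zero fun i hi => by
        have hlt : ¬ k0 ≤ i := by have := Finset.mem_range.mp hi; omega
        simp [hzh, hlt]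
    rw [h1, zero_add]
    refine Finset.sum_congr rfl fun i _ => ?_
    have h2 : k0 ≤ k0 + i := Nat.le_add_right _ _
    show zh (k0 + i) • α (k0 + i) = z i • b i
    rw [hzh]
    simp only [h2, if_true]
    have h3 : k0 + i - k0 = i := by omega
    have h4 : k0 + i = i + k0 := by omega
    rw [h3, h4]
  have hball : ∀ t : ℤ_[p], ‖t‖ ≤ ‖b 0‖ → t ∈ H := fun t ht => ball_mem H b hbnz hsumb t ht
  have hb0pos : 0 < ‖b 0‖ := norm_pos_iff.mpr (hbnz 0)
  -- the minimal `n` such that some element of `H` is not divisible by `p^n`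
  have hSne : ∃ n : ℕ, ∃ h, h ∈ H ∧ ¬ (p:ℤ_[p])^n ∣ h := by
    obtain ⟨n, hn⟩ := exists_pow_lt_of_lt_one hb0pos (p_inv_lt_one (p := p))
    exact ⟨n, b 0, hαmem _, fun hd =>
      absurd ((pow_dvd_iff_norm_le _ _).mp hd) (not_le.mpr hn)⟩
  set k := Nat.find hSne with hkdef
  obtain ⟨h0, hh0H, hh0nd⟩ := Nat.find_spec hSne
  rw [← hkdef] at hh0nd
  have hkne : k ≠ 0 := by
    intro heq
    rw [heq, pow_zero] at hh0nd
    exact hh0nd (one_dvd _)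
  have hlow : ∀ x, x ∈ H → (p:ℤ_[p])^(k-1) ∣ x := by
    intro x hx
    by_contra hnd
    exact Nat.find_min hSne (by omega : k - 1 < k) ⟨x, hx, hnd⟩
  obtain ⟨u, hu⟩ := hlow h0 hh0H
  have hunit : IsUnit u := by
    by_contra hnu
    rw [PadicInt.not_isUnit_iff] at hnu
    obtain ⟨w, hw⟩ := (PadicInt.norm_lt_one_iff_dvd u).mp hnu
    apply hh0nd
    refine ⟨w, ?_⟩
    have hk1 : k = (k - 1) + 1 := by omega
    calc h0 = (p:ℤ_[p])^(k-1) * ((p:ℤ_[p]) * w) := by rw [hu, hw]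
      _ = (p:ℤ_[p])^((k-1)+1) * w := by rw [pow_succ]; ring
      _ = (p:ℤ_[p])^k * w := by rw [← hk1]
  obtain ⟨U, hU⟩ := hunit
  refine ⟨k - 1, ?_⟩
  ext x
  simp only [Set.mem_setOf_eq, SetLike.mem_coe]
  constructor
  · intro hx
    exact hlow x hx
  · rintro ⟨y, rfl⟩
    set c : ℤ_[p] := (↑U⁻¹ : ℤ_[p]) * y with hc
    obtain ⟨z, hz⟩ := exists_int_close (p := p) c hb0pos
    have huU : u * (↑U⁻¹ : ℤ_[p]) = 1 := by
      rw [← hU]; exact_mod_cast U.mul_inv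
    have h0c : h0 * c = (p:ℤ_[p])^(k-1) * y := by
      calc h0 * c = (p:ℤ_[p])^(k-1) * (u * (↑U⁻¹ : ℤ_[p])) * y := by rw [hu, hc]; ring
        _ = (p:ℤ_[p])^(k-1) * y := by rw [huU]; ring
    have hxc : (p:ℤ_[p])^(k-1) * y = z • h0 + h0 * (c - z) := by
      rw [zsmul_eq_mul, ← h0c]; ring
    rw [hxc]
    refine H.add_mem (H.zsmul_mem hh0H z) (hball _ ?_)
    rw [norm_mul]
    calc ‖h0‖ * ‖c - (z:ℤ_[p])‖ ≤ 1 * ‖b 0‖ :=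
      mul_le_mul (PadicInt.norm_le_one h0) hz (norm_nonneg _) zero_le_one
    _ = ‖b 0‖ := one_mul _
end
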